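/- Let X = Σ εₙ xₙ be an a.s. convergent Rademacher series in a Banach space. Then the maximum (essential supremum) of ‖X‖ over all sign choices equals ℓ₁^w((xₙ)) = sup_{‖x*‖≤1} Σ |x*(xₙ)|; in particular P(‖X‖ > ℓ₁^w((xₙ))) = 0. -/

import Mathlib

open MeasureTheory ProbabilityTheory Filter

/-- `(εₙ)` is a Rademacher sequence: independent, with `P(εₙ = 1) = P(εₙ = -1) = 1/2`. -/
def IsRademacher {Ω : Type*} [MeasurableSpace Ω] (μ : Measure Ω) (ε : ℕ → Ω → ℝ) : Prop :=
  (∀ n, Measurable (ε n)) ∧ iIndepFun ε μ ∧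
    ∀ n, μ {ω | ε n ω = 1} = 1 / 2 ∧ μ {ω | ε n ω = -1} = 1 / 2

/-- The weak-`ℓ₁` norm `ℓ₁^w((xₙ)) = sup_{‖x*‖≤1} ∑ |x*(xₙ)|`, valued in `ℝ≥0∞`. -/
noncomputable def l1w {E : Type*} [NormedAddCommGroup E] [NormedSpace ℝ E]
    (x : ℕ → E) : ENNReal :=
  ⨆ f : {f : E →L[ℝ] ℝ // ‖f‖ ≤ 1}, ∑' n, ENNReal.ofReal |f.1 (x n)|

private lemma rademacher_signs {Ω : Type*} [MeasurableSpace Ω] (μ : Measure Ω)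
    [IsProbabilityMeasure μ] (ε : ℕ → Ω → ℝ) (hε : IsRademacher μ ε) :
    ∀ᵐ ω ∂μ, ∀ n, ε n ω = 1 ∨ ε n ω = -1 := by
  rw [ae_all_iff]
  intro n
  have hm1 : MeasurableSet {ω | ε n ω = 1} := hε.1 n (measurableSet_singleton 1)
  have hm2 : MeasurableSet {ω | ε n ω = -1} := hε.1 n (measurableSet_singleton (-1))
  have hdisj : Disjoint {ω | ε n ω = 1} {ω | ε n ω = -1} := by
    rw [Set.disjoint_left]
    intro ω h1 h2
    simp only [Set.mem_setOf_eq] at h1 h2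
    rw [h1] at h2; norm_num at h2
  have hu : μ ({ω | ε n ω = 1} ∪ {ω | ε n ω = -1}) = 1 := by
    rw [measure_union hdisj hm2, (hε.2.2 n).1, (hε.2.2 n).2]
    rw [one_div, ENNReal.inv_two_add_inv_two]
  have : ∀ᵐ ω ∂μ, ω ∈ {ω | ε n ω = 1} ∪ {ω | ε n ω = -1} := by
    rw [← prob_compl_eq_zero_iff (hm1.union hm2)] at hu
    exact measure_eq_zero_iff_ae_notMem.1 hu |>.mono fun ω h => not_not.1 (by simpa using h)
  exact this.mono fun ω h => by simpa using h

private lemma hasSum_apply {Ω : Type*} {E : Type*} [NormedAddCommGroup E] [NormedSpace ℝ E]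
    (ε : ℕ → Ω → ℝ) (x : ℕ → E) (X : Ω → E) (f : E →L[ℝ] ℝ) {ω : Ω}
    (hω : HasSum (fun n => ε n ω • x n) (X ω)) :
    HasSum (fun n => ε n ω * f (x n)) (f (X ω)) := by
  have := f.hasSum hω
  simpa [smul_eq_mul] using this

private lemma upper_ae {Ω : Type*} [MeasurableSpace Ω] (μ : Measure Ω) [IsProbabilityMeasure μ]
    {E : Type*} [NormedAddCommGroup E] [NormedSpace ℝ E]
    (ε : ℕ → Ω → ℝ) (hε : IsRademacher μ ε) (x : ℕ → E) (X : Ω → E)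
    (hX : ∀ᵐ ω ∂μ, HasSum (fun n => ε n ω • x n) (X ω)) :
    ∀ᵐ ω ∂μ, ENNReal.ofReal ‖X ω‖ ≤ l1w x := by
  filter_upwards [hX, rademacher_signs μ ε hε] with ω hω hsgn
  obtain ⟨f, hf1, hfX⟩ := exists_dual_vector'' ℝ (X ω)
  have hsum : HasSum (fun n => ε n ω * f (x n)) (f (X ω)) := hasSum_apply ε x X f hω
  have hone : ∀ n, |ε n ω * f (x n)| = |f (x n)| := by
    intro n; rcases hsgn n with h | h <;> simp [h, abs_mul]
  have habs : Summable fun n => |f (x n)| :=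
    (summable_abs_iff.2 hsum.summable).congr hone
  have h2 : f (X ω) ≤ ∑' n, |f (x n)| := by
    rw [← hsum.tsum_eq]
    refine Summable.tsum_le_tsum (fun n => ?_) hsum.summable habs
    calc ε n ω * f (x n) ≤ |ε n ω * f (x n)| := le_abs_self _
      _ = |f (x n)| := hone n
  have h3 : ‖X ω‖ = f (X ω) := by simpa using hfX.symm
  calc ENNReal.ofReal ‖X ω‖ ≤ ENNReal.ofReal (∑' n, |f (x n)|) :=
        ENNReal.ofReal_le_ofReal (by rw [h3]; exact h2)
    _ = ∑' n, ENNReal.ofReal |f (x n)| :=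
        ENNReal.ofReal_tsum_of_nonneg (fun n => abs_nonneg _) habs
    _ ≤ l1w x :=
        le_iSup (fun g : {g : E →L[ℝ] ℝ // ‖g‖ ≤ 1} => ∑' n, ENNReal.ofReal |g.1 (x n)|) ⟨f, hf1⟩

private lemma lower_bound {Ω : Type*} [MeasurableSpace Ω] (μ : Measure Ω)
    [IsProbabilityMeasure μ]
    {E : Type*} [NormedAddCommGroup E] [NormedSpace ℝ E]
    (ε : ℕ → Ω → ℝ) (hε : IsRademacher μ ε) (x : ℕ → E) (X : Ω → E)
    (hX : ∀ᵐ ω ∂μ, HasSum (fun n => ε n ω • x n) (X ω))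
    (f : E →L[ℝ] ℝ) (hf : ‖f‖ ≤ 1) (N : ℕ) :
    ENNReal.ofReal (∑ i ∈ Finset.range N, |f (x i)|) ≤
      essSup (fun ω => ENNReal.ofReal ‖X ω‖) μ := by
  set a : ℕ → ℝ := fun i => f (x i) with ha
  set c : ℝ := ∑ i ∈ Finset.range N, |a i| with hc
  set S : ℕ → Ω → ℝ := fun M ω => ∑ k ∈ Finset.range M, ε (k + N) ω * a (k + N) with hS
  set L : Ω → EReal := fun ω => Filter.liminf (fun M => ((S M ω : ℝ) : EReal)) Filter.atTop with hL
  set mi : ℕ → MeasurableSpace Ω :=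
    fun i => (inferInstance : MeasurableSpace ℝ).comap (ε i) with hmi
  have h_le : ∀ n, mi n ≤ ‹MeasurableSpace Ω› := fun n => (hε.1 n).comap_le
  have hIndep := ProbabilityTheory.indep_biSup_compl h_le hε.2.1.iIndep {n : ℕ | n < N}
  -- measurability of tail partial sums w.r.t. the tail σ-algebra
  have hSm : ∀ M, Measurable[⨆ n ∈ {n : ℕ | n < N}ᶜ, mi n] (S M) := by
    intro M
    apply Finset.measurable_sum
    intro k _
    have h1 : Measurable[mi (k + N)] (ε (k + N)) := measurable_iff_comap_le.2 le_rfl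
    have h2 : mi (k + N) ≤ ⨆ n ∈ {n : ℕ | n < N}ᶜ, mi n :=
      le_biSup mi (by simp)
    exact (h1.mono h2 le_rfl).mul_const _
  have hLm : Measurable[⨆ n ∈ {n : ℕ | n < N}ᶜ, mi n] L :=
    Measurable.liminf fun M => (measurable_coe_real_ereal.comp (hSm M))
  set T₁ : Set Ω := L ⁻¹' Set.Ici 0 with hT₁
  set T₂ : Set Ω := L ⁻¹' Set.Iic 0 with hT₂
  have hT₁m : MeasurableSet[⨆ n ∈ {n : ℕ | n < N}ᶜ, mi n] T₁ := hLm measurableSet_Ici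
  have hT₂m : MeasurableSet[⨆ n ∈ {n : ℕ | n < N}ᶜ, mi n] T₂ := hLm measurableSet_Iic
  have hTpos : μ T₁ ≠ 0 ∨ μ T₂ ≠ 0 := by
    by_contra h
    push_neg at h
    have hu : T₁ ∪ T₂ = Set.univ := by
      ext ω
      simp only [Set.mem_union, Set.mem_preimage, Set.mem_Ici, Set.mem_Iic, Set.mem_univ,
        iff_true]
      exact (le_total 0 (L ω)).imp id id
    have := measure_union_le (μ := μ) T₁ T₂
    rw [hu, h.1, h.2, measure_univ] at this
    simp at this
  obtain ⟨s, hs, T, hTm, hTμ, hTprop⟩ :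
      ∃ s : ℝ, (s = 1 ∨ s = -1) ∧ ∃ T : Set Ω,
        MeasurableSet[⨆ n ∈ {n : ℕ | n < N}ᶜ, mi n] T ∧ μ T ≠ 0 ∧
        ∀ ω ∈ T, ∀ t : ℝ, Filter.Tendsto (fun M => S M ω) Filter.atTop (nhds t) → 0 ≤ s * t := by
    rcases hTpos with h | h
    · refine ⟨1, Or.inl rfl, T₁, hT₁m, h, fun ω hω t ht => ?_⟩
      have hco : Filter.Tendsto (fun M => ((S M ω : ℝ) : EReal)) Filter.atTop (nhds (t : EReal)) :=
        (continuous_coe_real_ereal.tendsto t).comp ht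
      have hLt : L ω = (t : EReal) := hco.liminf_eq
      have h0 : (0 : EReal) ≤ (t : EReal) := hLt ▸ hω
      rw [one_mul]
      exact_mod_cast h0
    · refine ⟨-1, Or.inr rfl, T₂, hT₂m, h, fun ω hω t ht => ?_⟩
      have hco : Filter.Tendsto (fun M => ((S M ω : ℝ) : EReal)) Filter.atTop (nhds (t : EReal)) :=
        (continuous_coe_real_ereal.tendsto t).comp ht
      have hLt : L ω = (t : EReal) := hco.liminf_eq
      have h0 : (t : EReal) ≤ (0 : EReal) := hLt ▸ hω
      have : t ≤ 0 := by exact_mod_cast h0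
      linarith
  set σ : ℕ → ℝ := fun i => if 0 ≤ a i then s else -s with hσ
  have hσ1 : ∀ i, σ i = 1 ∨ σ i = -1 := by
    intro i
    by_cases hi : 0 ≤ a i <;> rcases hs with h | h <;> simp [hσ, hi, h]
  set A : Set Ω := ⋂ i ∈ Finset.range N, ε i ⁻¹' {σ i} with hA
  have hAm : MeasurableSet[⨆ n ∈ {n : ℕ | n < N}, mi n] A := by
    refine MeasurableSet.biInter (Finset.range N).countable_toSet fun i hi => ?_
    have h1 : MeasurableSet[mi i] (ε i ⁻¹' {σ i}) := ⟨{σ i}, measurableSet_singleton _, rfl⟩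
    have h2 : mi i ≤ ⨆ n ∈ {n : ℕ | n < N}, mi n :=
      le_biSup mi (show i ∈ {n : ℕ | n < N} by simpa using (Finset.mem_coe.1 hi))
    exact h2 _ h1
  have hA2 : ∀ i, μ (ε i ⁻¹' {σ i}) = 1 / 2 := by
    intro i
    rcases hσ1 i with h | h <;> rw [h]
    · exact (hε.2.2 i).1
    · exact (hε.2.2 i).2
  have hAμ : μ A = (1 / 2 : ENNReal) ^ N := by
    rw [hA, hε.2.1.meas_biInter (S := Finset.range N) (s := fun i => ε i ⁻¹' {σ i})
      (fun i _ => ⟨{σ i}, measurableSet_singleton _, rfl⟩)]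
    simp [hA2]
  have hABμ : μ (A ∩ T) = μ A * μ T :=
    (Indep_iff _ _ _).1 hIndep A T hAm hTm
  have hABpos : μ (A ∩ T) ≠ 0 := by
    rw [hABμ, hAμ]
    exact mul_ne_zero (pow_ne_zero _ (by norm_num)) hTμ
  have hkey : ∀ᵐ ω ∂μ, ω ∈ A ∩ T → ENNReal.ofReal c ≤ ENNReal.ofReal ‖X ω‖ := by
    filter_upwards [hX] with ω hω hmem
    obtain ⟨hAω, hTω⟩ := hmem
    have hsum : HasSum (fun n => ε n ω * a n) (f (X ω)) := hasSum_apply ε x X f hω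
    have hsummable := hsum.summable
    have htail : Summable fun k => ε (k + N) ω * a (k + N) := (summable_nat_add_iff N).2 hsummable
    set t : ℝ := ∑' k, ε (k + N) ω * a (k + N) with htdef
    have htendsto : Filter.Tendsto (fun M => S M ω) Filter.atTop (nhds t) := by
      have := htail.hasSum.tendsto_sum_nat
      exact this
    have hst : 0 ≤ s * t := hTprop ω hTω t htendsto
    have hdecomp : ∑ i ∈ Finset.range N, ε i ω * a i + t = f (X ω) := by
      rw [htdef, Summable.sum_add_tsum_nat_add N hsummable, hsum.tsum_eq]
    have hAε : ∀ i ∈ Finset.range N, ε i ω = σ i := by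
      intro i hi
      have := Set.mem_iInter₂.1 hAω i hi
      simpa using this
    have hterm : ∀ i ∈ Finset.range N, ε i ω * a i = s * |a i| := by
      intro i hi
      rw [hAε i hi]
      by_cases h0 : 0 ≤ a i
      · rw [hσ]; simp only [if_pos h0]; rw [abs_of_nonneg h0]
      · rw [hσ]; simp only [if_neg h0]
        rw [abs_of_neg (lt_of_not_ge h0)]; ring
    have hsum_eq : ∑ i ∈ Finset.range N, ε i ω * a i = s * c := by
      rw [hc, Finset.mul_sum]
      exact Finset.sum_congr rfl hterm
    have hfX : f (X ω) = s * c + t := by rw [← hdecomp, hsum_eq]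
    have hss : s * s = 1 := by rcases hs with h | h <;> rw [h] <;> norm_num
    have h1 : c ≤ s * f (X ω) := by
      have e : s * f (X ω) = c + s * t := by
        rw [hfX]
        calc s * (s * c + t) = s * s * c + s * t := by ring
          _ = c + s * t := by rw [hss, one_mul]
      linarith
    have h2 : s * f (X ω) ≤ ‖X ω‖ := by
      have habs : |s| = 1 := by rcases hs with h | h <;> simp [h]
      have hle1 : s * f (X ω) ≤ |s * f (X ω)| := le_abs_self _
      have hle2 : |s * f (X ω)| = |f (X ω)| := by rw [abs_mul, habs, one_mul]
      have hle3 : |f (X ω)| ≤ ‖f‖ * ‖X ω‖ := by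
        have := f.le_opNorm (X ω)
        simpa [Real.norm_eq_abs] using this
      have hle4 : ‖f‖ * ‖X ω‖ ≤ 1 * ‖X ω‖ :=
        mul_le_mul_of_nonneg_right hf (norm_nonneg _)
      calc s * f (X ω) ≤ |f (X ω)| := hle2 ▸ hle1
        _ ≤ ‖f‖ * ‖X ω‖ := hle3
        _ ≤ ‖X ω‖ := by linarith [hle4]
    exact ENNReal.ofReal_le_ofReal (h1.trans h2)
  by_contra hcon
  push_neg at hcon
  have hae := ae_le_essSup (μ := μ) (f := fun ω => ENNReal.ofReal ‖X ω‖)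
  have hnull : ∀ᵐ ω ∂μ, ω ∉ A ∩ T := by
    filter_upwards [hkey, hae] with ω h1 h2 hmem
    exact absurd ((h1 hmem).trans h2) (not_le.2 hcon)
  exact hABpos (measure_eq_zero_iff_ae_notMem.2 hnull)

theorem stmt15 {Ω : Type*} [MeasurableSpace Ω] (μ : Measure Ω) [IsProbabilityMeasure μ]
    {E : Type*} [NormedAddCommGroup E] [NormedSpace ℝ E] [CompleteSpace E]
    (ε : ℕ → Ω → ℝ) (hε : IsRademacher μ ε) (x : ℕ → E) (X : Ω → E)
    (hX : ∀ᵐ ω ∂μ, HasSum (fun n => ε n ω • x n) (X ω)) :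
    essSup (fun ω => ENNReal.ofReal ‖X ω‖) μ = l1w x ∧
      μ {ω | l1w x < ENNReal.ofReal ‖X ω‖} = 0 := by
  have hupper := upper_ae μ ε hε x X hX
  have hup : essSup (fun ω => ENNReal.ofReal ‖X ω‖) μ ≤ l1w x :=
    essSup_le_of_ae_le _ hupper
  have hlow : l1w x ≤ essSup (fun ω => ENNReal.ofReal ‖X ω‖) μ := by
    rw [l1w]
    refine iSup_le ?_
    rintro ⟨f, hf⟩
    rw [ENNReal.tsum_eq_iSup_sum]
    refine iSup_le fun sfin => ?_
    obtain ⟨N, hN⟩ := sfin.exists_nat_subset_range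
    calc ∑ i ∈ sfin, ENNReal.ofReal |f (x i)|
        ≤ ∑ i ∈ Finset.range N, ENNReal.ofReal |f (x i)| :=
          Finset.sum_le_sum_of_subset hN
      _ = ENNReal.ofReal (∑ i ∈ Finset.range N, |f (x i)|) :=
          (ENNReal.ofReal_sum_of_nonneg fun i _ => abs_nonneg _).symm
      _ ≤ _ := lower_bound μ ε hε x X hX f hf N
  refine ⟨le_antisymm hup hlow, ?_⟩
  refine measure_eq_zero_iff_ae_notMem.2 ?_
  filter_upwards [hupper] with ω h
  simpa using not_lt.2 h
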